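/- arXiv:1311.3459 — 2 statements merged into one kernel-verified Lean document; each statement's English description precedes it below -/
import Mathlib

section
/- Let φ : [0,∞) × ℝⁿ → ℝ be smooth with 1 + Σ_{i=1}^n φ_i² - e^t φ_t² > 0 everywhere, and suppose φ satisfies the timelike extremal surface equation -φ_{tt} - ((n+2)/2) φ_t + e^{-t} Σ φ_{ii} + [φ_t ∂_t(Σ φ_i² - e^t φ_t²)]/[2(1+Σ φ_i² - e^t φ_t²)] - Σ_j e^{-t}[φ_j ∂_{x_j}(Σ φ_i² - e^t φ_t²)]/[2(1+Σ φ_i² - e^t φ_t²)] = 0. Define ψ : [-2, 0) × ℝⁿ → ℝ by ψ(τ, x) = φ( -2 ln(-τ/2), x ) (i.e., τ = -2 e^{-t/2}). Then 1 + Σ_{i=1}^n ψ_{x_i}² - ψ_τ² > 0 everywhere and ψ satisfies the Born–Infeld-type equation with source: -∂_τ( ψ_τ / √(1 + Σ_i ψ_{x_i}² - ψ_τ²) ) + Σ_{j=1}^n ∂_{x_j}( ψ_{x_j} / √(1 + Σ_i ψ_{x_i}² - ψ_τ²) ) = -((n+1)/τ) · ψ_τ / √(1 + Σ_i ψ_{x_i}²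 - ψ_τ²). -/
open Real MeasureTheory

/-- Time derivative ∂ₜ of a function on ℝ × ℝⁿ. -/
noncomputable def pT (n : ℕ) (φ : ℝ × (Fin n → ℝ) → ℝ) : ℝ × (Fin n → ℝ) → ℝ :=
  fun p => deriv (fun s => φ (s, p.2)) p.1

/-- Spatial derivative ∂ₓᵢ of a function on ℝ × ℝⁿ. -/
noncomputable def pX (n : ℕ) (i : Fin n) (φ : ℝ × (Fin n → ℝ) → ℝ) : ℝ × (Fin n → ℝ) → ℝ :=
  fun p => deriv (fun s => φ (p.1, Function.update p.2 i s)) (p.2 i)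

/-- Mixed spatial derivative D^I = ∂ₓ₁^{I₁} ⋯ ∂ₓₙ^{Iₙ}. -/
noncomputable def Dmix (n : ℕ) (I : Fin n → ℕ) (φ : ℝ × (Fin n → ℝ) → ℝ) : ℝ × (Fin n → ℝ) → ℝ :=
  (List.ofFn (fun i : Fin n => (pX n i)^[I i])).foldr (· ∘ ·) id φ

/-- The de Sitter wave operator □_g φ = -∂ₜ²φ - (n/2)∂ₜφ + e^{-t} Σᵢ ∂ₓᵢ²φ. -/
noncomputable def dBox (n : ℕ) (φ : ℝ × (Fin n → ℝ) → ℝ) : ℝ × (Fin n → ℝ) → ℝ :=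
  fun p => -(pT n (pT n φ) p) - ((n : ℝ) / 2) * pT n φ p
    + Real.exp (-p.1) * ∑ i : Fin n, pX n i (pX n i φ) p

/-- The de Sitter null form Q(φ,ψ) = -φₜψₜ + e^{-t} Σᵢ φᵢψᵢ. -/
noncomputable def nullQ (n : ℕ) (φ ψ : ℝ × (Fin n → ℝ) → ℝ) : ℝ × (Fin n → ℝ) → ℝ :=
  fun p => -(pT n φ p) * pT n ψ p + Real.exp (-p.1) * ∑ i : Fin n, pX n i φ p * pX n i ψ p


lemma slice_t_hasDerivAt {n : ℕ} {f : ℝ × (Fin n → ℝ) → ℝ} (hf : Differentiable ℝ f)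
    (p : ℝ × (Fin n → ℝ)) :
    HasDerivAt (fun s => f (s, p.2)) (fderiv ℝ f p (1, 0)) p.1 := by
  have h1 : HasDerivAt (fun s : ℝ => (s, p.2)) ((1 : ℝ), (0 : Fin n → ℝ)) p.1 :=
    (hasDerivAt_id p.1).prodMk (hasDerivAt_const _ _)
  have h2 := ((hf p).hasFDerivAt).comp_hasDerivAt p.1 h1
  exact h2

lemma slice_x_hasDerivAt {n : ℕ} {f : ℝ × (Fin n → ℝ) → ℝ} (hf : Differentiable ℝ f)
    (i : Fin n) (p : ℝ × (Fin n → ℝ)) :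
    HasDerivAt (fun s => f (p.1, Function.update p.2 i s)) (fderiv ℝ f p (0, Pi.single i 1))
      (p.2 i) := by
  have h1 : HasDerivAt (fun s : ℝ => ((p.1 : ℝ), Function.update p.2 i s))
      ((0 : ℝ), (Pi.single i 1 : Fin n → ℝ)) (p.2 i) :=
    (hasDerivAt_const _ _).prodMk (hasDerivAt_update p.2 i (p.2 i))
  have h2 := ((hf (p.1, Function.update p.2 i (p.2 i))).hasFDerivAt).comp_hasDerivAt (p.2 i) h1
  rw [Function.update_eq_self] at h2
  exact h2

lemma pT_eq {n : ℕ} {f : ℝ × (Fin n → ℝ) → ℝ} (hf : Differentiable ℝ f)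
    (p : ℝ × (Fin n → ℝ)) : pT n f p = fderiv ℝ f p (1, 0) :=
  (slice_t_hasDerivAt hf p).deriv

lemma pX_eq {n : ℕ} {f : ℝ × (Fin n → ℝ) → ℝ} (hf : Differentiable ℝ f)
    (i : Fin n) (p : ℝ × (Fin n → ℝ)) : pX n i f p = fderiv ℝ f p (0, Pi.single i 1) :=
  (slice_x_hasDerivAt hf i p).deriv

lemma contDiff_clm_apply' {E : Type*} [NormedAddCommGroup E] [NormedSpace ℝ E]
    {f : E → ℝ} (hf : ContDiff ℝ (⊤ : ℕ∞) f) (v : E) :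
    ContDiff ℝ (⊤ : ℕ∞) (fun p => fderiv ℝ f p v) := by
  have h1 : ContDiff ℝ (⊤ : ℕ∞) (fderiv ℝ f) := hf.fderiv_right (by simp)
  exact (ContinuousLinearMap.apply ℝ ℝ v).contDiff.comp h1

lemma contDiff_pT {n : ℕ} {f : ℝ × (Fin n → ℝ) → ℝ} (hf : ContDiff ℝ (⊤ : ℕ∞) f) :
    ContDiff ℝ (⊤ : ℕ∞) (pT n f) := by
  have : pT n f = fun p => fderiv ℝ f p (1, 0) :=
    funext fun p => pT_eq (hf.differentiable (by simp)) p
  rw [this]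
  exact contDiff_clm_apply' hf _

lemma contDiff_pX {n : ℕ} {f : ℝ × (Fin n → ℝ) → ℝ} (hf : ContDiff ℝ (⊤ : ℕ∞) f) (i : Fin n) :
    ContDiff ℝ (⊤ : ℕ∞) (pX n i f) := by
  have : pX n i f = fun p => fderiv ℝ f p (0, Pi.single i 1) :=
    funext fun p => pX_eq (hf.differentiable (by simp)) i p
  rw [this]
  exact contDiff_clm_apply' hf _


lemma final_alg (n : ℕ) (τ a b wt r : ℝ) (c d wx : Fin n → ℝ)
    (hτ : τ ≠ 0) (hr : r ≠ 0)
    (hkey : -b - ((n:ℝ)+2)/2*a + τ^2/4 * (∑ i : Fin n, d i) + a*wt/(2*r^2)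
      - ∑ j : Fin n, τ^2/4*(c j * wx j)/(2*r^2) = 0) :
    -(2/τ^2 * (a/r) + -2/τ * ((b*r - a*(wt/(2*r)))/r^2 * (-2/τ)))
      + ∑ j : Fin n, (d j * r - c j * (wx j/(2*r)))/r^2
    = -(((n:ℝ)+1)/τ) * (-2/τ * a / r) := by
  have h1 : ∑ j : Fin n, (d j * r - c j * (wx j/(2*r)))/r^2
      = (∑ j : Fin n, d j) * (r/r^2) - (∑ j : Fin n, c j * wx j) * (1/(2*r*r^2)) := by
    rw [Finset.sum_mul, Finset.sum_mul, ← Finset.sum_sub_distrib]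
    exact Finset.sum_congr rfl fun j _ => by ring
  have h2 : ∑ j : Fin n, τ^2/4*(c j * wx j)/(2*r^2)
      = (∑ j : Fin n, c j * wx j) * (τ^2/(8*r^2)) := by
    rw [Finset.sum_mul]
    exact Finset.sum_congr rfl fun j _ => by ring
  rw [h1]; rw [h2] at hkey
  linear_combination (norm := skip) (4/(τ^2*r)) * hkey
  field_simp
  ring

theorem hasDerivAt_congr_deriv {f : ℝ → ℝ} {v v' x : ℝ} (h : HasDerivAt f v x) (e : v = v') :
    HasDerivAt f v' x := e ▸ h

/-- Under the change of time variable `τ = -2e^{-t/2}` (i.e. `t = -2 ln(-τ/2)`), a timelike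
solution of the extremal surface equation in de Sitter spacetime becomes a solution of the
Born–Infeld-type equation with source `-((n+1)/τ)·ψ_τ/√(1+Σψ_{xᵢ}²-ψ_τ²)`. -/
theorem stmt3 (n : ℕ) (hn : 1 ≤ n) (φ : ℝ × (Fin n → ℝ) → ℝ) (hφ : ContDiff ℝ (⊤ : ℕ∞) φ)
    (W : ℝ × (Fin n → ℝ) → ℝ)
    (hW : W = fun q => (∑ i : Fin n, (pX n i φ q) ^ 2) - Real.exp q.1 * (pT n φ q) ^ 2)
    (hpos : ∀ p : ℝ × (Fin n → ℝ), 0 ≤ p.1 → 0 < 1 + W p)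
    (hEL : ∀ p : ℝ × (Fin n → ℝ), 0 ≤ p.1 →
      -(pT n (pT n φ) p) - (((n : ℝ) + 2) / 2) * pT n φ p
        + Real.exp (-p.1) * (∑ i : Fin n, pX n i (pX n i φ) p)
        + pT n φ p * pT n W p / (2 * (1 + W p))
        - (∑ j : Fin n, Real.exp (-p.1) * (pX n j φ p * pX n j W p) / (2 * (1 + W p))) = 0)
    (ψ : ℝ × (Fin n → ℝ) → ℝ)
    (hψ : ψ = fun q => φ (-2 * Real.log (-q.1 / 2), q.2)) :
    ∀ q : ℝ × (Fin n → ℝ), -2 ≤ q.1 → q.1 < 0 →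
      (0 < 1 + (∑ i : Fin n, (pX n i ψ q) ^ 2) - (pT n ψ q) ^ 2) ∧
      -(pT n (fun r => pT n ψ r /
            Real.sqrt (1 + (∑ i : Fin n, (pX n i ψ r) ^ 2) - (pT n ψ r) ^ 2)) q)
        + (∑ j : Fin n, pX n j (fun r => pX n j ψ r /
            Real.sqrt (1 + (∑ i : Fin n, (pX n i ψ r) ^ 2) - (pT n ψ r) ^ 2)) q)
        = -(((n : ℝ) + 1) / q.1) *
            (pT n ψ q / Real.sqrt (1 + (∑ i : Fin n, (pX n i ψ q) ^ 2) - (pT n ψ q) ^ 2)) := by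
  have hφd : Differentiable ℝ φ := hφ.differentiable (by simp)
  have hpTφ : ContDiff ℝ (⊤ : ℕ∞) (pT n φ) := contDiff_pT hφ
  have hpTφd : Differentiable ℝ (pT n φ) := hpTφ.differentiable (by simp)
  have hpXφd : ∀ j : Fin n, Differentiable ℝ (pX n j φ) := fun j =>
    (contDiff_pX hφ j).differentiable (by simp)
  have hWc : ContDiff ℝ (⊤ : ℕ∞) W := by
    rw [hW]
    exact (ContDiff.sum fun i _ => (contDiff_pX hφ i).pow 2).sub
      ((Real.contDiff_exp.comp contDiff_fst).mul (hpTφ.pow 2))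
  have hWd : Differentiable ℝ W := hWc.differentiable (by simp)
  -- derivative of the time change
  have hTd : ∀ s : ℝ, s < 0 → HasDerivAt (fun u : ℝ => -2 * Real.log (-u / 2)) (-2 / s) s := by
    intro s hs
    have hpos2 : (0:ℝ) < -s / 2 := by linarith
    have h1 : HasDerivAt (fun u : ℝ => -u / 2) (-1 / 2 : ℝ) s := (hasDerivAt_id s).neg.div_const 2
    have h2 := (Real.hasDerivAt_log (ne_of_gt hpos2)).comp s h1
    have h4 : HasDerivAt (fun u : ℝ => -2 * Real.log (-u / 2)) (-2 * ((-s / 2)⁻¹ * (-1 / 2))) s :=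
      h2.const_mul (-2 : ℝ)
    have hs0 : s ≠ 0 := ne_of_lt hs
    exact hasDerivAt_congr_deriv h4 (by field_simp)
  have hexpS : ∀ s : ℝ, s < 0 → Real.exp (-2 * Real.log (-s / 2)) = 4 / s ^ 2 := by
    intro s hs
    have hpos2 : (0:ℝ) < -s / 2 := by linarith
    have he : (-2 : ℝ) * Real.log (-s / 2) = -Real.log (-s / 2) + -Real.log (-s / 2) := by ring
    rw [he, Real.exp_add, Real.exp_neg, Real.exp_log hpos2]
    rw [show ((-s / 2)⁻¹ * (-s / 2)⁻¹ : ℝ) = (4 / s^2 : ℝ) from by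
      field_simp; ring]
  -- F1: spatial derivatives transfer
  have hpXψ : ∀ (s : ℝ) (y : Fin n → ℝ) (i : Fin n),
      pX n i ψ (s, y) = pX n i φ (-2 * Real.log (-s / 2), y) := by
    intro s y i
    simp only [pX, hψ]
  -- F2: time derivative chain rule
  have hpTψ : ∀ s : ℝ, s < 0 → ∀ y : Fin n → ℝ,
      pT n ψ (s, y) = -2 / s * pT n φ (-2 * Real.log (-s / 2), y) := by
    intro s hs y
    have hTc := hTd s hs
    have houter := slice_t_hasDerivAt hφd (-2 * Real.log (-s / 2), y)
    have hcomp := houter.comp s hTc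
    have h0 : pT n ψ (s, y) = deriv (fun u => φ (-2 * Real.log (-u / 2), y)) s := by
      simp only [pT, hψ]
    have h2 : deriv (fun u => φ (-2 * Real.log (-u / 2), y)) s
        = fderiv ℝ φ (-2 * Real.log (-s / 2), y) (1, 0) * (-2 / s) := hcomp.deriv
    rw [h0, h2, ← pT_eq hφd (-2 * Real.log (-s / 2), y)]
    ring
  -- F3: the gradient quantity transfers
  have hV : ∀ s : ℝ, s < 0 → ∀ y : Fin n → ℝ,
      1 + (∑ i : Fin n, (pX n i ψ (s, y)) ^ 2) - (pT n ψ (s, y)) ^ 2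
        = 1 + W (-2 * Real.log (-s / 2), y) := by
    intro s hs y
    have hW' : W (-2 * Real.log (-s / 2), y)
        = (∑ i : Fin n, (pX n i φ (-2 * Real.log (-s / 2), y)) ^ 2)
          - Real.exp (-2 * Real.log (-s / 2)) * (pT n φ (-2 * Real.log (-s / 2), y)) ^ 2 := by
      rw [hW]
    rw [hW', hexpS s hs, hpTψ s hs y]
    have : (∑ i : Fin n, (pX n i ψ (s, y)) ^ 2)
        = ∑ i : Fin n, (pX n i φ (-2 * Real.log (-s / 2), y)) ^ 2 :=
      Finset.sum_congr rfl fun i _ => by rw [hpXψ s y i]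
    rw [this]
    have hs0 : s ≠ 0 := ne_of_lt hs
    field_simp
    ring
  intro q hq2 hq1
  obtain ⟨τ, x⟩ := q
  dsimp only at hq2 hq1 ⊢
  have hτ : τ < 0 := hq1
  have hτne : τ ≠ 0 := ne_of_lt hτ
  set t₀ : ℝ := -2 * Real.log (-τ / 2) with ht₀def
  have hpos2 : (0:ℝ) < -τ / 2 := by linarith
  have hlog : Real.log (-τ / 2) ≤ 0 := Real.log_nonpos (by linarith) (by linarith)
  have ht₀0 : 0 ≤ t₀ := by rw [ht₀def]; nlinarith [hlog]
  have hS : 0 < 1 + W (t₀, x) := hpos (t₀, x) ht₀0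
  have hSne : (1 + W (t₀, x)) ≠ 0 := ne_of_gt hS
  have hrpos : 0 < Real.sqrt (1 + W (t₀, x)) := Real.sqrt_pos.2 hS
  have hrne : Real.sqrt (1 + W (t₀, x)) ≠ 0 := ne_of_gt hrpos
  have hr2 : Real.sqrt (1 + W (t₀, x)) ^ 2 = 1 + W (t₀, x) := Real.sq_sqrt hS.le
  constructor
  · rw [hV τ hτ x]; exact hS
  -- time derivative of the quotient, in t variable
  have hGa : HasDerivAt (fun t => pT n φ (t, x)) (pT n (pT n φ) (t₀, x)) t₀ := by
    have h := slice_t_hasDerivAt hpTφd (t₀, x)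
    rwa [← pT_eq hpTφd (t₀, x)] at h
  have hGw : HasDerivAt (fun t => W (t, x)) (pT n W (t₀, x)) t₀ := by
    have h := slice_t_hasDerivAt hWd (t₀, x)
    rwa [← pT_eq hWd (t₀, x)] at h
  have hsqT : HasDerivAt (fun t => Real.sqrt (1 + W (t, x)))
      (pT n W (t₀, x) / (2 * Real.sqrt (1 + W (t₀, x)))) t₀ := by
    have h1 : HasDerivAt (fun t => 1 + W (t, x)) (pT n W (t₀, x)) t₀ := hGw.const_add 1
    have h2 := (Real.hasDerivAt_sqrt hSne).comp t₀ h1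
    exact hasDerivAt_congr_deriv h2 (by ring)
  have hGt : HasDerivAt (fun t => pT n φ (t, x) / Real.sqrt (1 + W (t, x)))
      ((pT n (pT n φ) (t₀, x) * Real.sqrt (1 + W (t₀, x))
        - pT n φ (t₀, x) * (pT n W (t₀, x) / (2 * Real.sqrt (1 + W (t₀, x)))))
        / Real.sqrt (1 + W (t₀, x)) ^ 2) t₀ := hGa.div hsqT hrne
  have h1τ : HasDerivAt (fun s : ℝ => -2 / s) (2 / τ ^ 2) τ :=
    hasDerivAt_congr_deriv ((hasDerivAt_const τ (-2:ℝ)).div (hasDerivAt_id τ) hτne) (by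
      field_simp; ring)
  have hcomp : HasDerivAt
      (fun u => pT n φ (-2 * Real.log (-u / 2), x)
        / Real.sqrt (1 + W (-2 * Real.log (-u / 2), x)))
      ((pT n (pT n φ) (t₀, x) * Real.sqrt (1 + W (t₀, x))
        - pT n φ (t₀, x) * (pT n W (t₀, x) / (2 * Real.sqrt (1 + W (t₀, x)))))
        / Real.sqrt (1 + W (t₀, x)) ^ 2 * (-2 / τ)) τ := by have h := hGt.comp τ (hTd τ hτ); exact h
  have hprod : HasDerivAt
      (fun s => -2 / s * (pT n φ (-2 * Real.log (-s / 2), x)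
        / Real.sqrt (1 + W (-2 * Real.log (-s / 2), x))))
      (2 / τ ^ 2 * (pT n φ (t₀, x) / Real.sqrt (1 + W (t₀, x)))
        + -2 / τ * ((pT n (pT n φ) (t₀, x) * Real.sqrt (1 + W (t₀, x))
          - pT n φ (t₀, x) * (pT n W (t₀, x) / (2 * Real.sqrt (1 + W (t₀, x)))))
          / Real.sqrt (1 + W (t₀, x)) ^ 2 * (-2 / τ))) τ := h1τ.mul hcomp
  have hEv : (fun s => pT n ψ (s, x)
        / Real.sqrt (1 + (∑ i : Fin n, (pX n i ψ (s, x)) ^ 2) - (pT n ψ (s, x)) ^ 2))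
      =ᶠ[nhds τ] (fun s => -2 / s * (pT n φ (-2 * Real.log (-s / 2), x)
        / Real.sqrt (1 + W (-2 * Real.log (-s / 2), x)))) := by
    filter_upwards [Iio_mem_nhds hτ] with s hs
    rw [hV s hs x, hpTψ s hs x, mul_div_assoc]
  have hpTbig : pT n (fun r => pT n ψ r
        / Real.sqrt (1 + (∑ i : Fin n, (pX n i ψ r) ^ 2) - (pT n ψ r) ^ 2)) (τ, x)
      = 2 / τ ^ 2 * (pT n φ (t₀, x) / Real.sqrt (1 + W (t₀, x)))
        + -2 / τ * ((pT n (pT n φ) (t₀, x) * Real.sqrt (1 + W (t₀, x))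
          - pT n φ (t₀, x) * (pT n W (t₀, x) / (2 * Real.sqrt (1 + W (t₀, x)))))
          / Real.sqrt (1 + W (t₀, x)) ^ 2 * (-2 / τ)) := by
    have h := hEv.deriv_eq
    rw [hprod.deriv] at h
    exact h
  -- spatial derivatives of the quotients
  have hXj : ∀ j : Fin n,
      pX n j (fun r => pX n j ψ r
        / Real.sqrt (1 + (∑ i : Fin n, (pX n i ψ r) ^ 2) - (pT n ψ r) ^ 2)) (τ, x)
      = (pX n j (pX n j φ) (t₀, x) * Real.sqrt (1 + W (t₀, x))
          - pX n j φ (t₀, x) * (pX n j W (t₀, x) / (2 * Real.sqrt (1 + W (t₀, x)))))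
        / Real.sqrt (1 + W (t₀, x)) ^ 2 := by
    intro j
    have hXa : HasDerivAt (fun v => pX n j φ (t₀, Function.update x j v))
        (pX n j (pX n j φ) (t₀, x)) (x j) := by
      have h := slice_x_hasDerivAt (hpXφd j) j (t₀, x)
      rwa [← pX_eq (hpXφd j) j (t₀, x)] at h
    have hXw : HasDerivAt (fun v => W (t₀, Function.update x j v)) (pX n j W (t₀, x)) (x j) := by
      have h := slice_x_hasDerivAt hWd j (t₀, x)
      rwa [← pX_eq hWd j (t₀, x)] at h
    have hsqX : HasDerivAt (fun v => Real.sqrt (1 + W (t₀, Function.update x j v)))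
        (pX n j W (t₀, x) / (2 * Real.sqrt (1 + W (t₀, x)))) (x j) := by
      have h1 : HasDerivAt (fun v => 1 + W (t₀, Function.update x j v))
          (pX n j W (t₀, x)) (x j) := hXw.const_add 1
      have h2 := (Real.hasDerivAt_sqrt (x := 1 + W (t₀, Function.update x j (x j)))
        (by rw [Function.update_eq_self]; exact hSne)).comp (x j) h1
      rw [Function.update_eq_self] at h2
      exact hasDerivAt_congr_deriv h2 (by ring)
    have hdiv := hXa.div hsqX (by rw [Function.update_eq_self]; exact hrne)
    simp only [Function.update_eq_self] at hdiv
    have hfun : (fun v => pX n j ψ (τ, Function.update x j v)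
          / Real.sqrt (1 + (∑ i : Fin n, (pX n i ψ (τ, Function.update x j v)) ^ 2)
            - (pT n ψ (τ, Function.update x j v)) ^ 2))
        = fun v => pX n j φ (t₀, Function.update x j v)
          / Real.sqrt (1 + W (t₀, Function.update x j v)) := by
      funext v
      rw [hV τ hτ (Function.update x j v), hpXψ τ (Function.update x j v) j]
    show deriv (fun v => pX n j ψ (τ, Function.update x j v)
          / Real.sqrt (1 + (∑ i : Fin n, (pX n i ψ (τ, Function.update x j v)) ^ 2)
            - (pT n ψ (τ, Function.update x j v)) ^ 2)) (x j) = _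
    rw [hfun]
    exact hdiv.deriv
  have hsum := Finset.sum_congr rfl fun j (_ : j ∈ Finset.univ) => hXj j
  rw [hpTbig, hsum, hV τ hτ x, hpTψ τ hτ x]
  -- final algebra
  have hkey := hEL (t₀, x) ht₀0
  dsimp only at hkey
  have hE : Real.exp (-t₀) = τ ^ 2 / 4 := by
    rw [Real.exp_neg, ht₀def, hexpS τ hτ, inv_div]
  rw [hE, ← hr2] at hkey
  rw [← ht₀def]
  exact final_alg n τ (pT n φ (t₀, x)) (pT n (pT n φ) (t₀, x)) (pT n W (t₀, x))
    (Real.sqrt (1 + W (t₀, x))) (fun j => pX n j φ (t₀, x)) (fun j => pX n j (pX n j φ) (t₀, x))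
    (fun j => pX n j W (t₀, x)) hτne hrne hkey
end

section
/- For every integer I_0 ≥ 1 there exist real constants C_0, …, C_{I_0 - 1} such that for every smooth function v : ℝ × ℝⁿ → ℝ satisfying □_g v - ∂_t v = 0 everywhere, one has □_g(∂_t^{I_0} v) - ∂_t(∂_t^{I_0} v) = e^{-t} Σ_{i=1}^n Σ_{M=0}^{I_0 - 1} C_M ∂_t^M ∂_{x_i}² v everywhere. -/
open Real MeasureTheory

lemma top_add_one_le : ((⊤:ℕ∞) : WithTop ℕ∞) + 1 ≤ ((⊤:ℕ∞) : WithTop ℕ∞) := by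
  norm_cast
lemma one_le_top' : (1 : WithTop ℕ∞) ≤ ((⊤:ℕ∞) : WithTop ℕ∞) := by
  exact_mod_cast le_top

noncomputable def dd (n : ℕ) (w : ℝ × (Fin n → ℝ)) (φ : ℝ × (Fin n → ℝ) → ℝ) :
    ℝ × (Fin n → ℝ) → ℝ := fun p => fderiv ℝ φ p w

variable {n : ℕ}

lemma dd_smooth {φ : ℝ × (Fin n → ℝ) → ℝ} (h : ContDiff ℝ (⊤:ℕ∞) φ) (w : ℝ × (Fin n → ℝ)) :
    ContDiff ℝ (⊤:ℕ∞) (dd n w φ) :=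
  (h.fderiv_right top_add_one_le).clm_apply contDiff_const

lemma hasDerivAt_slice_t {φ : ℝ × (Fin n → ℝ) → ℝ} (h : ContDiff ℝ (⊤:ℕ∞) φ)
    (p : ℝ × (Fin n → ℝ)) :
    HasDerivAt (fun s => φ (s, p.2)) (fderiv ℝ φ p ((1:ℝ), (0 : Fin n → ℝ))) p.1 := by
  have h1 : HasDerivAt (fun s : ℝ => ((s, p.2) : ℝ × (Fin n → ℝ))) ((1:ℝ), (0:Fin n → ℝ)) p.1 :=
    (hasDerivAt_id p.1).prodMk (hasDerivAt_const _ _)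
  have h2 : HasFDerivAt φ (fderiv ℝ φ p) (p.1, p.2) := by
    rw [Prod.mk.eta]; exact (h.differentiable (by simp) p).hasFDerivAt
  exact h2.comp_hasDerivAt p.1 h1

lemma pT_eq_s5 {φ : ℝ × (Fin n → ℝ) → ℝ} (h : ContDiff ℝ (⊤:ℕ∞) φ) :
    pT n φ = dd n ((1:ℝ), (0 : Fin n → ℝ)) φ :=
  funext fun p => (hasDerivAt_slice_t h p).deriv

lemma myHasDerivAt_update (x : Fin n → ℝ) (i : Fin n) (s : ℝ) :
    HasDerivAt (fun s => Function.update x i s) (Pi.single i (1:ℝ)) s := by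
  rw [hasDerivAt_pi]
  intro j
  by_cases hj : j = i
  · subst hj
    simp only [Function.update_self, Pi.single_eq_same]
    exact hasDerivAt_id s
  · simp only [Function.update_of_ne hj, Pi.single_eq_of_ne hj]
    exact hasDerivAt_const _ _

lemma hasDerivAt_slice_x {φ : ℝ × (Fin n → ℝ) → ℝ} (h : ContDiff ℝ (⊤:ℕ∞) φ) (i : Fin n)
    (p : ℝ × (Fin n → ℝ)) :
    HasDerivAt (fun s => φ (p.1, Function.update p.2 i s))
      (fderiv ℝ φ p ((0:ℝ), Pi.single i (1:ℝ))) (p.2 i) := by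
  have h1 : HasDerivAt (fun s : ℝ => ((p.1, Function.update p.2 i s) : ℝ × (Fin n → ℝ)))
      ((0:ℝ), Pi.single i (1:ℝ)) (p.2 i) :=
    (hasDerivAt_const _ _).prodMk (myHasDerivAt_update p.2 i (p.2 i))
  have h2 : HasFDerivAt φ (fderiv ℝ φ p) (p.1, Function.update p.2 i (p.2 i)) := by
    rw [Function.update_eq_self, Prod.mk.eta]
    exact (h.differentiable (by simp) p).hasFDerivAt
  exact h2.comp_hasDerivAt _ h1

lemma pX_eq_s5 {φ : ℝ × (Fin n → ℝ) → ℝ} (h : ContDiff ℝ (⊤:ℕ∞) φ) (i : Fin n) :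
    pX n i φ = dd n ((0:ℝ), Pi.single i (1:ℝ)) φ :=
  funext fun p => (hasDerivAt_slice_x h i p).deriv

lemma dd_comm {φ : ℝ × (Fin n → ℝ) → ℝ} (h : ContDiff ℝ (⊤:ℕ∞) φ)
    (w u : ℝ × (Fin n → ℝ)) (p : ℝ × (Fin n → ℝ)) :
    dd n w (dd n u φ) p = dd n u (dd n w φ) p := by
  have hd : Differentiable ℝ (fderiv ℝ φ) := (h.fderiv_right top_add_one_le).differentiable (by simp)
  have key : ∀ a b : ℝ × (Fin n → ℝ), fderiv ℝ (fun q => fderiv ℝ φ q a) p b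
      = fderiv ℝ (fderiv ℝ φ) p b a := by
    intro a b
    rw [fderiv_clm_apply (hd p) (differentiableAt_const a)]
    simp
  have hsymm := second_derivative_symmetric
      (fun y => (h.differentiable (by simp) y).hasFDerivAt) ((hd p).hasFDerivAt) u w
  show fderiv ℝ (fun q => fderiv ℝ φ q u) p w = fderiv ℝ (fun q => fderiv ℝ φ q w) p u
  rw [key u w, key w u]
  exact hsymm.symm

lemma pT_smooth {φ : ℝ × (Fin n → ℝ) → ℝ} (h : ContDiff ℝ (⊤:ℕ∞) φ) :
    ContDiff ℝ (⊤:ℕ∞) (pT n φ) := by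
  rw [pT_eq_s5 h]; exact dd_smooth h _

lemma pX_smooth {φ : ℝ × (Fin n → ℝ) → ℝ} (h : ContDiff ℝ (⊤:ℕ∞) φ) (i : Fin n) :
    ContDiff ℝ (⊤:ℕ∞) (pX n i φ) := by
  rw [pX_eq_s5 h i]; exact dd_smooth h _

lemma iter_pT_smooth {φ : ℝ × (Fin n → ℝ) → ℝ} (h : ContDiff ℝ (⊤:ℕ∞) φ) :
    ∀ I : ℕ, ContDiff ℝ (⊤:ℕ∞) ((pT n)^[I] φ)
  | 0 => h
  | (I+1) => by
    rw [Function.iterate_succ_apply']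
    exact pT_smooth (iter_pT_smooth h I)

lemma pT_pX_comm {φ : ℝ × (Fin n → ℝ) → ℝ} (h : ContDiff ℝ (⊤:ℕ∞) φ) (i : Fin n) :
    pT n (pX n i φ) = pX n i (pT n φ) := by
  rw [pX_eq_s5 h i, pT_eq_s5 h, pT_eq_s5 (dd_smooth h _), pX_eq_s5 (dd_smooth h _) i]
  exact funext fun p => dd_comm h _ _ p

lemma pXX_pT_comm {φ : ℝ × (Fin n → ℝ) → ℝ} (h : ContDiff ℝ (⊤:ℕ∞) φ) (i : Fin n) :
    pX n i (pX n i (pT n φ)) = pT n (pX n i (pX n i φ)) := by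
  rw [← pT_pX_comm h i, ← pT_pX_comm (pX_smooth h i) i]

lemma pXX_pT_iter {φ : ℝ × (Fin n → ℝ) → ℝ} (h : ContDiff ℝ (⊤:ℕ∞) φ) (i : Fin n) :
    ∀ I : ℕ, pX n i (pX n i ((pT n)^[I] φ)) = (pT n)^[I] (pX n i (pX n i φ))
  | 0 => rfl
  | (I+1) => by
    rw [Function.iterate_succ_apply', pXX_pT_comm (iter_pT_smooth h I) i,
      pXX_pT_iter h i I]
    exact (Function.iterate_succ_apply' (pT n) I _).symm

lemma hasDerivAt_pT {φ : ℝ × (Fin n → ℝ) → ℝ} (h : ContDiff ℝ (⊤:ℕ∞) φ)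
    (p : ℝ × (Fin n → ℝ)) :
    HasDerivAt (fun s => φ (s, p.2)) (pT n φ p) p.1 := by
  rw [pT_eq_s5 h]; exact hasDerivAt_slice_t h p

lemma hasDerivAt_expneg (t : ℝ) : HasDerivAt (fun s : ℝ => Real.exp (-s)) (-Real.exp (-t)) t := by
  have := (hasDerivAt_neg t).exp
  rwa [mul_neg_one] at this

lemma comm_step {φ : ℝ × (Fin n → ℝ) → ℝ} (h : ContDiff ℝ (⊤:ℕ∞) φ) (p : ℝ × (Fin n → ℝ)) :
    dBox n (pT n φ) p - pT n (pT n φ) p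
      = pT n (fun q => dBox n φ q - pT n φ q) p
        + Real.exp (-p.1) * ∑ i : Fin n, pX n i (pX n i φ) p := by
  have h1 := hasDerivAt_pT (pT_smooth (pT_smooth h)) p
  have h2 := hasDerivAt_pT (pT_smooth h) p
  have h3 : HasDerivAt (fun s => ∑ i : Fin n, pX n i (pX n i φ) (s, p.2))
      (∑ i : Fin n, pT n (pX n i (pX n i φ)) p) p.1 :=
    HasDerivAt.fun_sum fun i _ => hasDerivAt_pT (pX_smooth (pX_smooth h i) i) p
  have hbig := (((h1.neg.sub (h2.const_mul ((n:ℝ)/2))).add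
      ((hasDerivAt_expneg p.1).mul h3)).sub h2)
  have hval : pT n (fun q => dBox n φ q - pT n φ q) p
      = (-(pT n (pT n (pT n φ)) p) - ((n:ℝ)/2) * pT n (pT n φ) p
          + (-Real.exp (-p.1) * ∑ i : Fin n, pX n i (pX n i φ) p
            + Real.exp (-p.1) * ∑ i : Fin n, pT n (pX n i (pX n i φ)) p))
        - pT n (pT n φ) p := by
    have hh := hbig.deriv
    simp only [Prod.mk.eta] at hh
    exact hh
  rw [hval]
  simp only [dBox]
  rw [Finset.sum_congr rfl fun i _ => congrFun (pXX_pT_comm h i) p]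
  ring

lemma sum_shift (I : ℕ) (C : ℕ → ℝ) (hC : ∀ M, I ≤ M → C M = 0) (g : ℕ → ℝ) :
    (∑ M ∈ Finset.range I, C M * g (M+1)) - (∑ M ∈ Finset.range I, C M * g M) + g I
      = ∑ M ∈ Finset.range (I+1),
          ((if M = 0 then 0 else C (M-1)) - C M + (if M = I then 1 else 0)) * g M := by
  have h1 : ∑ M ∈ Finset.range (I+1), (if M = 0 then (0:ℝ) else C (M-1)) * g M
      = ∑ M ∈ Finset.range I, C M * g (M+1) := by
    rw [Finset.sum_range_succ']
    simp
  have h2 : ∑ M ∈ Finset.range (I+1), C M * g M = ∑ M ∈ Finset.range I, C M * g M := by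
    rw [Finset.sum_range_succ, hC I le_rfl]
    ring
  have h3 : ∑ M ∈ Finset.range (I+1), (if M = I then (1:ℝ) else 0) * g M = g I := by
    simp only [ite_mul, one_mul, zero_mul]
    rw [Finset.sum_ite_eq' (Finset.range (I+1)) I g]
    simp
  simp only [sub_mul, add_mul, Finset.sum_add_distrib, Finset.sum_sub_distrib, h1, h2, h3]

lemma main_aux (n : ℕ) : ∀ I : ℕ, 1 ≤ I →
    ∃ C : ℕ → ℝ, (∀ M, I ≤ M → C M = 0) ∧
      ∀ v : ℝ × (Fin n → ℝ) → ℝ, ContDiff ℝ (⊤:ℕ∞) v →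
      (∀ p : ℝ × (Fin n → ℝ), dBox n v p - pT n v p = 0) →
      ∀ p : ℝ × (Fin n → ℝ),
        dBox n ((pT n)^[I] v) p - pT n ((pT n)^[I] v) p
          = Real.exp (-p.1) *
              ∑ i : Fin n, ∑ M ∈ Finset.range I, C M * (pT n)^[M] (pX n i (pX n i v)) p := by
  intro I hI
  induction I, hI using Nat.le_induction with
  | base =>
    refine ⟨fun M => if M = 0 then 1 else 0, fun M hM => if_neg (by omega), ?_⟩
    intro v hv hsol p
    simp only [Function.iterate_one]
    rw [comm_step hv p]
    have h0 : (fun q => dBox n v q - pT n v q) = fun _ => (0:ℝ) := funext hsol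
    rw [h0]
    simp [pT, Finset.sum_range_one]
  | succ I hI ih =>
    obtain ⟨C, hC0, hC⟩ := ih
    refine ⟨fun M => (if M = 0 then 0 else C (M-1)) - C M + (if M = I then 1 else 0),
      ?_, ?_⟩
    · intro M hM
      have h1 : M ≠ 0 := by omega
      have h3 : M ≠ I := by omega
      simp only [h1, h3, if_false, hC0 (M-1) (by omega), hC0 M (by omega)]
      ring
    intro v hv hsol p
    have hφs : ContDiff ℝ (⊤:ℕ∞) ((pT n)^[I] v) := iter_pT_smooth hv I
    rw [Function.iterate_succ_apply', comm_step hφs p]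
    have hfun : (fun q => dBox n ((pT n)^[I] v) q - pT n ((pT n)^[I] v) q)
        = fun q => Real.exp (-q.1) * ∑ i : Fin n, ∑ M ∈ Finset.range I,
            C M * (pT n)^[M] (pX n i (pX n i v)) q :=
      funext (hC v hv hsol)
    rw [hfun]
    have hsm : ∀ (i : Fin n) (M : ℕ), ContDiff ℝ (⊤:ℕ∞) ((pT n)^[M] (pX n i (pX n i v))) :=
      fun i M => iter_pT_smooth (pX_smooth (pX_smooth hv i) i) M
    have hS : HasDerivAt (fun s => ∑ i : Fin n, ∑ M ∈ Finset.range I,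
          C M * (pT n)^[M] (pX n i (pX n i v)) (s, p.2))
        (∑ i : Fin n, ∑ M ∈ Finset.range I,
          C M * pT n ((pT n)^[M] (pX n i (pX n i v))) p) p.1 :=
      HasDerivAt.fun_sum fun i _ => HasDerivAt.fun_sum fun M _ =>
        (hasDerivAt_pT (hsm i M) p).const_mul (C M)
    have hmul := (hasDerivAt_expneg p.1).mul hS
    have hPT : pT n (fun q => Real.exp (-q.1) * ∑ i : Fin n, ∑ M ∈ Finset.range I,
          C M * (pT n)^[M] (pX n i (pX n i v)) q) p
        = -Real.exp (-p.1) * (∑ i : Fin n, ∑ M ∈ Finset.range I,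
              C M * (pT n)^[M] (pX n i (pX n i v)) p)
          + Real.exp (-p.1) * ∑ i : Fin n, ∑ M ∈ Finset.range I,
              C M * pT n ((pT n)^[M] (pX n i (pX n i v))) p := by
      have hh := hmul.deriv
      simp only [Prod.mk.eta] at hh
      exact hh
    rw [hPT]
    rw [Finset.sum_congr rfl fun (i : Fin n) _ => congrFun (pXX_pT_iter hv i I) p]
    have hiter : ∀ (i : Fin n) (M : ℕ), pT n ((pT n)^[M] (pX n i (pX n i v))) p
        = (pT n)^[M+1] (pX n i (pX n i v)) p :=
      fun i M => congrFun (Function.iterate_succ_apply' (pT n) M _).symm p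
    simp only [hiter]
    have hR : ∑ i : Fin n, ∑ M ∈ Finset.range (I+1),
          ((if M = 0 then (0:ℝ) else C (M-1)) - C M + (if M = I then 1 else 0))
            * (pT n)^[M] (pX n i (pX n i v)) p
        = (∑ i : Fin n, ∑ M ∈ Finset.range I, C M * (pT n)^[M+1] (pX n i (pX n i v)) p)
          - (∑ i : Fin n, ∑ M ∈ Finset.range I, C M * (pT n)^[M] (pX n i (pX n i v)) p)
          + ∑ i : Fin n, (pT n)^[I] (pX n i (pX n i v)) p := by
      rw [← Finset.sum_sub_distrib, ← Finset.sum_add_distrib]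
      exact Finset.sum_congr rfl fun i _ =>
        (sum_shift I C hC0 (fun M => (pT n)^[M] (pX n i (pX n i v)) p)).symm
    rw [hR]
    ring

/-- Higher-order time derivatives of a solution of `□_gv - vₜ = 0` satisfy
`□_g(∂ₜ^{I₀}v) - ∂ₜ(∂ₜ^{I₀}v) = e^{-t} Σᵢ Σ_{M<I₀} C_M ∂ₜ^M ∂ₓᵢ² v`. -/
theorem stmt5 (n : ℕ) (hn : 1 ≤ n) (I0 : ℕ) (hI0 : 1 ≤ I0) :
    ∃ C : ℕ → ℝ, ∀ v : ℝ × (Fin n → ℝ) → ℝ, ContDiff ℝ (⊤ : ℕ∞) v →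
      (∀ p : ℝ × (Fin n → ℝ), dBox n v p - pT n v p = 0) →
      ∀ p : ℝ × (Fin n → ℝ),
        dBox n ((pT n)^[I0] v) p - pT n ((pT n)^[I0] v) p
          = Real.exp (-p.1) *
              ∑ i : Fin n, ∑ M ∈ Finset.range I0, C M * (pT n)^[M] (pX n i (pX n i v)) p := by
  obtain ⟨C, _, h⟩ := main_aux n I0 hI0
  exact ⟨C, h⟩
end
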